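/- With the notation of the one-point suspension: iterating the one-point suspension k times on a vertex w of a simplicial complex L yields the complex S_w(L)^{(k)} = (ast_L(w) ∗ ∂Δ_k) ∪ (lk_L(w) ∗ Δ_k), where Δ_k is the k-simplex on new vertices w_1,...,w_{k+1} and ∂Δ_k its boundary complex. In particular, for k = 1 this recovers the one-point suspension formula. -/
import Mathlib


open Finset

variable {V : Type*} [DecidableEq V]

/-- One-point suspension of a complex `F` (a set of faces over an ambient vertex
type) at a vertex `w`, with `a, b` the two new replacement vertices:
`(ast_F(w) ∗ a) ∪ (ast_F(w) ∗ b) ∪ (lk_F(w) ∗ {a,b})`. -/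
def sus (F : Set (Finset V)) (w a b : V) : Set (Finset V) :=
  {u | ∃ s : Finset V, w ∉ s ∧
    ((s ∈ F ∧ ∃ t ⊆ ({a} : Finset V), u = s ∪ t) ∨
     (s ∈ F ∧ ∃ t ⊆ ({b} : Finset V), u = s ∪ t) ∨
     (insert w s ∈ F ∧ ∃ t ⊆ ({a, b} : Finset V), u = s ∪ t))}

/-- The `k`-fold iterated one-point suspension of `F` at `w`, using the fresh
vertices `v 1, v 2, ...`: first suspend at `w` creating `v 1, v 2`, then suspend
at the newest vertex each time. -/
def iterSus (F : Set (Finset V)) (w : V) (v : ℕ → V) : ℕ → Set (Finset V)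
  | 0 => F
  | 1 => sus F w (v 1) (v 2)
  | (k + 2) => sus (iterSus F w v (k + 1)) (v (k + 2)) (v (k + 2)) (v (k + 3))

/-- Base case: the one-point suspension formula itself. -/
lemma sus_base {F : Set (Finset V)} {w : V} {v : ℕ → V}
    (hdown : ∀ s ∈ F, ∀ t ⊆ s, t ∈ F)
    (hinj : Function.Injective v) (hfresh : ∀ s ∈ F, ∀ i, v i ∉ s) :
    sus F w (v 1) (v 2) =
      {u | ∃ s : Finset V, ∃ t ⊆ (Icc 1 2).image v, w ∉ s ∧
        u = s ∪ t ∧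
        ((s ∈ F ∧ t ≠ (Icc 1 2).image v) ∨ insert w s ∈ F)} := by
  have h12 : v 1 ≠ v 2 := fun h => by have := hinj h; omega
  have hIcc : (Icc 1 2 : Finset ℕ) = {1, 2} := by decide
  have hA : (Icc 1 2).image v = {v 1, v 2} := by rw [hIcc]; simp
  ext u
  simp only [sus, Set.mem_setOf_eq, hA]
  constructor
  · rintro ⟨s, hws, hcase⟩
    rcases hcase with ⟨hsF, t, ht, hu⟩ | ⟨hsF, t, ht, hu⟩ | ⟨hsF, t, ht, hu⟩
    · refine ⟨s, t, ht.trans (by intro x hx; simp at hx ⊢; tauto), hws, hu,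
        Or.inl ⟨hsF, fun hEq => ?_⟩⟩
      have : v 2 ∈ t := hEq ▸ (by simp)
      have := ht this
      simp at this
      exact h12 this.symm
    · refine ⟨s, t, ht.trans (by intro x hx; simp at hx ⊢; tauto), hws, hu,
        Or.inl ⟨hsF, fun hEq => ?_⟩⟩
      have : v 1 ∈ t := hEq ▸ (by simp)
      have := ht this
      simp at this
      exact h12 this
    · exact ⟨s, t, ht, hws, hu, Or.inr hsF⟩
  · rintro ⟨s, t, ht, hws, hu, hcond⟩
    rcases hcond with ⟨hsF, htne⟩ | hwsF
    · by_cases h1 : v 1 ∈ t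
      · by_cases h2 : v 2 ∈ t
        · exact absurd (Subset.antisymm ht (by intro x hx; simp at hx; rcases hx with rfl | rfl <;> assumption)) htne
        · refine ⟨s, hws, Or.inl ⟨hsF, t, ?_, hu⟩⟩
          intro x hx
          have := ht hx
          simp at this ⊢
          rcases this with rfl | rfl
          · rfl
          · exact absurd hx h2
      · refine ⟨s, hws, Or.inr (Or.inl ⟨hsF, t, ?_, hu⟩)⟩
        intro x hx
        have := ht hx
        simp at this ⊢
        rcases this with rfl | rfl
        · exact absurd hx h1
        · rfl
    · exact ⟨s, hws, Or.inr (Or.inr ⟨hwsF, t, ht, hu⟩)⟩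

/-- Inductive step for the iterated one-point suspension. -/
lemma sus_step {F : Set (Finset V)} {w : V} {v : ℕ → V}
    (hdown : ∀ s ∈ F, ∀ t ⊆ s, t ∈ F)
    (hinj : Function.Injective v) (hvw : ∀ i, v i ≠ w)
    (hfresh : ∀ s ∈ F, ∀ i, v i ∉ s) (k : ℕ) :
    sus {u | ∃ s : Finset V, ∃ t ⊆ (Icc 1 (k + 2)).image v, w ∉ s ∧
          u = s ∪ t ∧
          ((s ∈ F ∧ t ≠ (Icc 1 (k + 2)).image v) ∨ insert w s ∈ F)}
        (v (k + 2)) (v (k + 2)) (v (k + 3)) =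
      {u | ∃ s : Finset V, ∃ t ⊆ (Icc 1 (k + 3)).image v, w ∉ s ∧
          u = s ∪ t ∧
          ((s ∈ F ∧ t ≠ (Icc 1 (k + 3)).image v) ∨ insert w s ∈ F)} := by
  set p := v (k + 2) with hp
  set q := v (k + 3) with hq
  set A := (Icc 1 (k + 2)).image v with hA
  set A' := (Icc 1 (k + 3)).image v with hA'
  have hpq : p ≠ q := fun h => by have := hinj h; omega
  have hpA : p ∈ A := mem_image.2 ⟨k + 2, by simp [mem_Icc], rfl⟩
  have hqA : q ∉ A := by
    rw [hA]
    simp only [mem_image, mem_Icc]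
    rintro ⟨i, ⟨h1, h2⟩, hqi⟩
    have := hinj hqi
    omega
  have hIcc : Icc 1 (k + 3) = insert (k + 3) (Icc 1 (k + 2)) := by
    ext i; simp [mem_Icc]; omega
  have hA'eq : A' = insert q A := by rw [hA', hIcc, image_insert]
  have hAA' : A ⊆ A' := hA'eq ▸ subset_insert _ _
  have hpA' : p ∈ A' := hAA' hpA
  have hqA' : q ∈ A' := hA'eq ▸ mem_insert_self _ _
  ext u
  simp only [sus, Set.mem_setOf_eq]
  constructor
  · rintro ⟨s', hps', hcase⟩
    rcases hcase with ⟨hs'G, t', ht', hu⟩ | ⟨hs'G, t', ht', hu⟩ | ⟨hs'G, t', ht', hu⟩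
    · -- t' ⊆ {p}
      obtain ⟨s, t, htA, hws, hseq, hcond⟩ := hs'G
      have hsF : s ∈ F := hcond.elim (·.1) (fun h => hdown _ h s (subset_insert w s))
      have hqt : q ∉ t := fun h => hqA (htA h)
      refine ⟨s, t ∪ t', union_subset (htA.trans hAA')
        (ht'.trans (singleton_subset_iff.2 hpA')), hws, ?_, ?_⟩
      · rw [hu, hseq, union_assoc]
      · rcases hcond with ⟨hsF', _⟩ | hwsF
        · refine Or.inl ⟨hsF', fun hEq => ?_⟩
          have hqmem : q ∈ t ∪ t' := hEq ▸ hqA'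
          rcases mem_union.1 hqmem with h | h
          · exact hqt h
          · exact hpq (mem_singleton.1 (ht' h)).symm
        · exact Or.inr hwsF
    · -- t' ⊆ {q}
      obtain ⟨s, t, htA, hws, hseq, hcond⟩ := hs'G
      have hsF : s ∈ F := hcond.elim (·.1) (fun h => hdown _ h s (subset_insert w s))
      have hpt : p ∉ t := fun h => hps' (hseq ▸ mem_union_right _ h)
      have hps : p ∉ s := hfresh s hsF (k + 2)
      refine ⟨s, t ∪ t', union_subset (htA.trans hAA')
        (ht'.trans (singleton_subset_iff.2 hqA')), hws, ?_, ?_⟩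
      · rw [hu, hseq, union_assoc]
      · rcases hcond with ⟨hsF', _⟩ | hwsF
        · refine Or.inl ⟨hsF', fun hEq => ?_⟩
          have hpmem : p ∈ t ∪ t' := hEq ▸ hpA'
          rcases mem_union.1 hpmem with h | h
          · exact hpt h
          · exact hpq (mem_singleton.1 (ht' h))
        · exact Or.inr hwsF
    · -- insert p s' ∈ G, t' ⊆ {p, q}
      obtain ⟨s, t, htA, hws, hseq, hcond⟩ := hs'G
      have hsF : s ∈ F := hcond.elim (·.1) (fun h => hdown _ h s (subset_insert w s))
      have hps : p ∉ s := hfresh s hsF (k + 2)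
      have hpt : p ∈ t := by
        have hm : p ∈ insert p s' := mem_insert_self _ _
        rw [hseq] at hm
        exact (mem_union.1 hm).resolve_left hps
      have hs'eq : s' = s ∪ (t \ {p}) := by
        ext x
        constructor
        · intro hx
          have hxp : x ≠ p := fun h => hps' (h ▸ hx)
          have hx' : x ∈ s ∪ t := hseq ▸ mem_insert_of_mem hx
          rcases mem_union.1 hx' with h | h
          · exact mem_union_left _ h
          · exact mem_union_right _ (mem_sdiff.2 ⟨h, by simp [hxp]⟩)
        · intro hx
          rcases mem_union.1 hx with h | h
          · have hxp : x ≠ p := fun he => hps (he ▸ h)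
            have : x ∈ insert p s' := hseq ▸ mem_union_left _ h
            exact (mem_insert.1 this).resolve_left hxp
          · obtain ⟨hxt, hxp⟩ := mem_sdiff.1 h
            simp only [mem_singleton] at hxp
            have : x ∈ insert p s' := hseq ▸ mem_union_right _ hxt
            exact (mem_insert.1 this).resolve_left hxp
      refine ⟨s, (t \ {p}) ∪ t', union_subset ((sdiff_subset.trans htA).trans hAA')
        (ht'.trans (by intro x hx; simp at hx; rcases hx with rfl | rfl <;> assumption)),
        hws, ?_, ?_⟩
      · rw [hu, hs'eq, union_assoc]
      · rcases hcond with ⟨hsF', htne⟩ | hwsF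
        · refine Or.inl ⟨hsF', fun hEq => ?_⟩
          obtain ⟨x, hxA, hxt⟩ := exists_of_ssubset (lt_of_le_of_ne htA htne)
          have hxp : x ≠ p := fun h => hxt (h ▸ hpt)
          have hxq : x ≠ q := fun h => hqA (h ▸ hxA)
          have hxA' : x ∈ A' := hAA' hxA
          rw [← hEq] at hxA'
          rcases mem_union.1 hxA' with h | h
          · exact hxt (mem_sdiff.1 h).1
          · have := ht' h
            simp at this
            tauto
        · exact Or.inr hwsF
  · rintro ⟨s, t, htA', hws, hu, hcond⟩
    have hsF : s ∈ F := hcond.elim (·.1) (fun h => hdown _ h s (subset_insert w s))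
    have hps : p ∉ s := hfresh s hsF (k + 2)
    have hsub : t \ {p, q} ⊆ A := by
      intro x hx
      obtain ⟨hxt, hxpq⟩ := mem_sdiff.1 hx
      simp only [mem_insert, mem_singleton] at hxpq
      push_neg at hxpq
      have := htA' hxt
      rw [hA'eq, mem_insert] at this
      exact this.resolve_left hxpq.2
    rcases hcond with ⟨hsF', htne⟩ | hwsF
    · by_cases hqt : q ∈ t
      · obtain ⟨x, hxA', hxt⟩ := exists_of_ssubset (lt_of_le_of_ne htA' htne)
        have hxq : x ≠ q := fun h => hxt (h ▸ hqt)
        have hxA : x ∈ A := by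
          rw [hA'eq, mem_insert] at hxA'
          exact hxA'.resolve_left hxq
        by_cases hpt : p ∈ t
        · -- case 3
          refine ⟨s ∪ (t \ {p, q}), ?_, Or.inr (Or.inr ⟨⟨s, t \ {q}, ?_, hws, ?_, Or.inl ⟨hsF, ?_⟩⟩,
            t ∩ {p, q}, inter_subset_right, ?_⟩)⟩
          · intro h
            rcases mem_union.1 h with h | h
            · exact hps h
            · simp at h
          · intro y hy
            obtain ⟨hyt, hyq⟩ := mem_sdiff.1 hy
            simp only [mem_singleton] at hyq
            have := htA' hyt
            rw [hA'eq, mem_insert] at this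
            exact this.resolve_left hyq
          · rw [← union_insert]
            congr 1
            ext y
            by_cases hy : y = p <;> simp [hy, hpt, hpq]
          · intro hEq
            rw [← hEq] at hxA
            obtain ⟨h1, _⟩ := mem_sdiff.1 hxA
            exact hxt h1
          · rw [hu, union_assoc, sdiff_union_inter]
        · -- case 2
          refine ⟨s ∪ (t \ {q}), ?_, Or.inr (Or.inl ⟨⟨s, t \ {q}, ?_, hws, rfl, Or.inl ⟨hsF, ?_⟩⟩,
            {q}, Subset.rfl, ?_⟩)⟩
          · intro h
            rcases mem_union.1 h with h | h
            · exact hps h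
            · exact hpt (mem_sdiff.1 h).1
          · intro y hy
            obtain ⟨hyt, hyq⟩ := mem_sdiff.1 hy
            simp only [mem_singleton] at hyq
            have := htA' hyt
            rw [hA'eq, mem_insert] at this
            exact this.resolve_left hyq
          · intro hEq
            have : p ∈ t \ {q} := hEq ▸ hpA
            exact hpt (mem_sdiff.1 this).1
          · rw [hu, union_assoc, sdiff_union_self_eq_union,
              union_eq_left.2 (singleton_subset_iff.2 hqt)]
      · -- q ∉ t : case 1
        have htA : t ⊆ A := by
          intro x hx
          have := htA' hx
          rw [hA'eq, mem_insert] at this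
          exact this.resolve_left (fun h => hqt (h ▸ hx))
        refine ⟨s ∪ (t \ {p}), ?_, Or.inl ⟨⟨s, t \ {p}, sdiff_subset.trans htA, hws, rfl,
          Or.inl ⟨hsF, ?_⟩⟩, t ∩ {p}, inter_subset_right, ?_⟩⟩
        · intro h
          rcases mem_union.1 h with h | h
          · exact hps h
          · simp at h
        · intro hEq
          have : p ∈ t \ {p} := hEq ▸ hpA
          simp at this
        · rw [hu, union_assoc, sdiff_union_inter]
    · -- insert w s ∈ F : case 3
      refine ⟨s ∪ (t \ {p, q}), ?_, Or.inr (Or.inr ⟨⟨s, insert p (t \ {p, q}),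
        insert_subset hpA hsub, hws, (union_insert _ _ _).symm, Or.inr hwsF⟩,
        t ∩ {p, q}, inter_subset_right, ?_⟩)⟩
      · intro h
        rcases mem_union.1 h with h | h
        · exact hps h
        · simp at h
      · rw [hu, union_assoc, sdiff_union_inter]

/-- Iterating the one-point suspension `k` times yields
`S_w(L)^{(k)} = (ast_L(w) ∗ ∂Δ_k) ∪ (lk_L(w) ∗ Δ_k)`, where `Δ_k` is the
`k`-simplex on the new vertices `w_1, ..., w_{k+1}` and `∂Δ_k` is its boundary.
(For `k = 1` this is the one-point suspension formula.) -/
theorem stmt_14 (F : Set (Finset V)) (hdown : ∀ s ∈ F, ∀ t ⊆ s, t ∈ F)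
    (w : V) (v : ℕ → V) (hinj : Function.Injective v)
    (hvw : ∀ i, v i ≠ w) (hfresh : ∀ s ∈ F, ∀ i, v i ∉ s) :
    ∀ k, 1 ≤ k →
      iterSus F w v k =
        {u | ∃ s : Finset V, ∃ t ⊆ (Icc 1 (k + 1)).image v, w ∉ s ∧
          u = s ∪ t ∧
          ((s ∈ F ∧ t ≠ (Icc 1 (k + 1)).image v) ∨ insert w s ∈ F)} := by
  refine Nat.le_induction ?_ ?_
  · exact sus_base hdown hinj hfresh
  · intro n hn ih
    obtain ⟨m, rfl⟩ : ∃ m, n = m + 1 := ⟨n - 1, by omega⟩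
    show iterSus F w v (m + 2) = _
    rw [show iterSus F w v (m + 2) =
      sus (iterSus F w v (m + 1)) (v (m + 2)) (v (m + 2)) (v (m + 3)) from rfl, ih]
    exact sus_step hdown hinj hvw hfresh m
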